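/- arXiv:1512.07276 — 2 statements merged into one kernel-verified Lean document; each statement's English description precedes it below -/
import Mathlib

section
/- If A is a real analytic function on a connected open set U in ℝ^d that is not identically zero, then its zero set {x ∈ U : A(x) = 0} has d-dimensional Lebesgue measure zero. -/
open MeasureTheory Metric Set Filter Topology

lemma aux_countable_of_isolated {X : Type*} [TopologicalSpace X] [SecondCountableTopology X]
    {S : Set X} (h : ∀ x ∈ S, ∀ᶠ y in 𝓝[≠] x, y ∉ S) : S.Countable := by
  have hd : DiscreteTopology S := by
    rw [discreteTopology_subtype_iff]
    intro x hx
    rw [inf_principal_eq_bot]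
    exact h x hx
  have : Countable S := TopologicalSpace.separableSpace_iff_countable.mp (by infer_instance)
  exact Set.countable_coe_iff.mp this

lemma aux_countable_zeros {f : ℝ → ℝ} {T : Set ℝ} (hTc : IsPreconnected T)
    (hf : AnalyticOnNhd ℝ f T) (hne : ∃ t ∈ T, f t ≠ 0) :
    {t ∈ T | f t = 0}.Countable := by
  apply aux_countable_of_isolated
  rintro t ⟨htT, htz⟩
  rcases (hf t htT).eventually_eq_zero_or_eventually_ne_zero with hev | hev
  · exfalso
    obtain ⟨t', ht'T, ht'⟩ := hne
    exact ht' (hf.eqOn_zero_of_preconnected_of_eventuallyEq_zero hTc htT hev ht'T)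
  · filter_upwards [hev] with s hs
    intro ⟨_, hsz⟩
    exact hs hsz

lemma aux_ev_zero {f : ℝ → ℝ} {t₀ : ℝ} (h : AnalyticAt ℝ f t₀)
    (hd : ∀ k, deriv^[k] f t₀ = 0) : ∀ᶠ t in 𝓝 t₀, f t = 0 := by
  obtain ⟨p, hp⟩ := h
  obtain ⟨r, hr⟩ := hp
  have key : ∀ s : ℝ, s ∈ Metric.eball (0:ℝ) r → f (t₀ + s) = 0 := by
    intro s hs
    have hsum := hr.hasSum_iteratedFDeriv hs
    have hz : ∀ k, iteratedFDeriv ℝ k f t₀ (fun _ => s) = 0 := by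
      intro k
      have h1 : (fun _ : Fin k => s) = fun i : Fin k => s • (fun _ : Fin k => (1:ℝ)) i := by
        funext i; simp
      rw [h1, ContinuousMultilinearMap.map_smul_univ]
      have h2 : iteratedFDeriv ℝ k f t₀ (fun _ => (1:ℝ)) = iteratedDeriv k f t₀ := by
        rw [iteratedDeriv_eq_iteratedFDeriv]
      rw [h2, iteratedDeriv_eq_iterate, hd k, smul_zero]
    have : HasSum (fun k : ℕ => (0:ℝ)) (f (t₀ + s)) := by
      convert hsum using 2 with k
      · rfl
      rw [hz k, smul_zero]
    simpa using this.unique hasSum_zero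
  have : Metric.eball t₀ r ∈ 𝓝 t₀ := Metric.eball_mem_nhds _ hr.r_pos
  filter_upwards [this] with t ht
  have : f (t₀ + (t - t₀)) = 0 := by
    apply key
    simpa [edist_dist, Real.dist_eq] using ht
  simpa using this

noncomputable def dLine {E : Type*} [NormedAddCommGroup E] [NormedSpace ℝ E]
    (v : E) (g : E → ℝ) : E → ℝ := fun y => fderiv ℝ g y v

lemma aux_line_hasDerivAt {E : Type*} [NormedAddCommGroup E] [NormedSpace ℝ E]
    {g : E → ℝ} {c v : E} {t₀ : ℝ} (hg : DifferentiableAt ℝ g (c + t₀ • v)) :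
    HasDerivAt (fun t : ℝ => g (c + t • v)) (fderiv ℝ g (c + t₀ • v) v) t₀ := by
  have h1 : HasDerivAt (fun t : ℝ => c + t • v) v t₀ := by
    simpa using ((hasDerivAt_id t₀).smul_const v).const_add c
  exact hg.hasFDerivAt.comp_hasDerivAt t₀ h1

lemma aux_dLine_analytic {E : Type*} [NormedAddCommGroup E] [NormedSpace ℝ E]
    {U : Set E} {f : E → ℝ} (hf : AnalyticOnNhd ℝ f U) (v : E) (k : ℕ) :
    AnalyticOnNhd ℝ ((dLine v)^[k] f) U := by
  induction k with
  | zero => exact hf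
  | succ k ih =>
      rw [Function.iterate_succ_apply']
      exact (ContinuousLinearMap.apply ℝ ℝ v).comp_analyticOnNhd ih.fderiv

lemma aux_line_analytic {E : Type*} [NormedAddCommGroup E] [NormedSpace ℝ E]
    {U : Set E} {f : E → ℝ} (hf : AnalyticOnNhd ℝ f U) (c v : E) {t : ℝ}
    (ht : c + t • v ∈ U) : AnalyticAt ℝ (fun s : ℝ => f (c + s • v)) t := by
  have hline : AnalyticAt ℝ (fun s : ℝ => c + s • v) t := by
    have h1 : AnalyticAt ℝ (fun s : ℝ => ((ContinuousLinearMap.id ℝ ℝ).smulRight v) s) t :=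
      ((ContinuousLinearMap.id ℝ ℝ).smulRight v).analyticAt t
    have h2 : AnalyticAt ℝ (fun _ : ℝ => c) t := analyticAt_const
    simpa [Pi.add_def] using h2.add h1
  exact AnalyticAt.comp (g := f) (f := fun s : ℝ => c + s • v) (hf _ ht) hline

lemma aux_slice_deriv {E : Type*} [NormedAddCommGroup E] [NormedSpace ℝ E]
    {U : Set E} (hU : IsOpen U) {f : E → ℝ} (hf : AnalyticOnNhd ℝ f U) (c v : E) (k : ℕ)
    {t : ℝ} (ht : c + t • v ∈ U) :
    deriv^[k] (fun s : ℝ => f (c + s • v)) t = ((dLine v)^[k] f) (c + t • v) := by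
  induction k generalizing t with
  | zero => rfl
  | succ k ih =>
      rw [Function.iterate_succ_apply', Function.iterate_succ_apply']
      have hTopen : IsOpen {s : ℝ | c + s • v ∈ U} := by
        have hcont : Continuous fun s : ℝ => c + s • v := by continuity
        exact hcont.isOpen_preimage U hU
      have hev : deriv^[k] (fun s : ℝ => f (c + s • v)) =ᶠ[𝓝 t]
          (fun s : ℝ => ((dLine v)^[k] f) (c + s • v)) := by
        filter_upwards [hTopen.mem_nhds ht] with s hs
        exact ih hs
      rw [hev.deriv_eq]
      have hgk := aux_dLine_analytic hf v k
      exact (aux_line_hasDerivAt ((hgk _ ht).differentiableAt)).deriv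

lemma aux_deriv_iterate_zero_fun (k : ℕ) : deriv^[k] (fun _ : ℝ => (0:ℝ)) = fun _ => 0 := by
  induction k with
  | zero => rfl
  | succ k ih => rw [Function.iterate_succ_apply', ih]; funext t; simp


lemma aux_iterate_deriv_ev_zero {h : ℝ → ℝ} {t : ℝ} (he : h =ᶠ[𝓝 t] 0) (k : ℕ) :
    deriv^[k] h =ᶠ[𝓝 t] 0 := by
  induction k with
  | zero => exact he
  | succ k ih =>
      rw [Function.iterate_succ_apply']
      refine ih.deriv.trans ?_
      have : deriv (0 : ℝ → ℝ) = 0 := by funext z; exact deriv_const z 0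
      rw [this]

-- main induction
lemma aux_main (d : ℕ) : ∀ (V : Set (Fin d → ℝ)), IsOpen V → IsPreconnected V →
    ∀ f : (Fin d → ℝ) → ℝ, AnalyticOnNhd ℝ f V → (∃ y ∈ V, f y ≠ 0) →
    volume {y ∈ V | f y = 0} = 0 := by
  induction d with
  | zero =>
      intro V _ _ f _ hne
      have : {y ∈ V | f y = 0} = ∅ := by
        ext y
        simp only [Set.mem_setOf_eq, Set.mem_empty_iff_false, iff_false, not_and]
        intro hyV
        obtain ⟨y', hy', h'⟩ := hne
        rwa [Subsingleton.elim y y']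
      rw [this, measure_empty]
  | succ d ih =>
      intro V hV hVc f hf hne
      have hnev : ∀ x ∈ V, ¬ (∀ᶠ y in 𝓝 x, f y = 0) := by
        intro x hx hev
        obtain ⟨y', hy', h'⟩ := hne
        exact h' (hf.eqOn_zero_of_preconnected_of_eventuallyEq_zero hVc hx hev hy')
      -- direction vector and cons identities
      set v : Fin (d+1) → ℝ := Pi.single 0 1 with hv
      have cons_eq : ∀ (t : ℝ) (x' : Fin d → ℝ), Fin.cons (0:ℝ) x' + t • v = Fin.cons t x' := by
        intro t x'
        funext j
        refine Fin.cases ?_ (fun i => ?_) j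
        · simp [hv]
        · simp [hv, Pi.single_eq_of_ne (Fin.succ_ne_zero i)]
      -- the box lemma
      have key : ∀ x : Fin (d+1) → ℝ, ∀ r : ℝ, 0 < r → ball x r ⊆ V →
          volume {y ∈ ball x r | f y = 0} = 0 := by
        intro x r hr hBV
        have hxV : x ∈ V := hBV (mem_ball_self hr)
        have hfB : ∃ y ∈ ball x r, f y ≠ 0 := by
          by_contra hc
          push_neg at hc
          exact hnev x hxV (eventually_of_mem (ball_mem_nhds x hr) hc)
        obtain ⟨ystar, hystarB, hystar⟩ := hfB
        set t₀ := x 0 with ht₀def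
        set I := ball (x 0) r with hIdef
        set P' := ball (Fin.tail x) r with hP'def
        have memB : ∀ (t : ℝ) (x' : Fin d → ℝ), Fin.cons t x' ∈ ball x r ↔ t ∈ I ∧ x' ∈ P' := by
          intro t x'
          rw [hIdef, hP'def, ball_pi _ hr, ball_pi _ hr, Set.mem_univ_pi]
          constructor
          · intro h
            refine ⟨by simpa using h 0, ?_⟩
            rw [Set.mem_univ_pi]
            intro j
            simpa [Fin.tail] using h j.succ
          · rintro ⟨h1, h2⟩ j
            rw [Set.mem_univ_pi] at h2
            refine Fin.cases ?_ (fun i => ?_) j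
            · simpa using h1
            · simpa [Fin.tail] using h2 i
        have ht₀I : t₀ ∈ I := mem_ball_self hr
        have hmemV : ∀ (t : ℝ) (x' : Fin d → ℝ), t ∈ I → x' ∈ P' → Fin.cons t x' ∈ V :=
          fun t x' ht hx' => hBV ((memB t x').mpr ⟨ht, hx'⟩)
        have hystar' : ystar 0 ∈ I ∧ Fin.tail ystar ∈ P' := by
          have := (memB (ystar 0) (Fin.tail ystar)).mp (by rwa [Fin.cons_self_tail])
          exact this
        -- slice analyticity on I, for x' ∈ P'
        have hsliceA : ∀ x' ∈ P', AnalyticOnNhd ℝ (fun s : ℝ => f (Fin.cons (0:ℝ) x' + s • v)) I :=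
          fun x' hx' t ht => aux_line_analytic hf _ v (by rw [cons_eq]; exact hmemV t x' ht hx')
        -- choose K
        have hK : ∃ K, ((dLine v)^[K] f) (Fin.cons t₀ (Fin.tail ystar)) ≠ 0 := by
          by_contra hall
          push_neg at hall
          set c := Fin.cons (0:ℝ) (Fin.tail ystar) with hcdef
          have hder : ∀ k, deriv^[k] (fun s : ℝ => f (c + s • v)) t₀ = 0 := by
            intro k
            rw [aux_slice_deriv hV hf c v k (by rw [hcdef, cons_eq]; exact hmemV t₀ _ ht₀I hystar'.2),
              hcdef, cons_eq]
            exact hall k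
          have hev0 := aux_ev_zero (hsliceA _ hystar'.2 t₀ ht₀I) hder
          have heq : EqOn (fun s : ℝ => f (c + s • v)) 0 I :=
            (hsliceA _ hystar'.2).eqOn_zero_of_preconnected_of_eventuallyEq_zero
              (convex_ball _ _).isPreconnected ht₀I hev0
          have := heq hystar'.1
          rw [hcdef] at this
          simp only [cons_eq, Fin.cons_self_tail] at this
          exact hystar this
        obtain ⟨K, hK⟩ := hK
        -- the function G on the d-dimensional ball
        set G : (Fin d → ℝ) → ℝ := fun x' => ((dLine v)^[K] f) (Fin.cons t₀ x') with hGdef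
        -- affine embedding x' ↦ cons t₀ x' is analytic
        have hGanalytic : AnalyticOnNhd ℝ G P' := by
          intro x' hx'
          have hgK := aux_dLine_analytic hf v K
          have haff : AnalyticAt ℝ (fun z : Fin d → ℝ => (Fin.cons t₀ z : Fin (d+1) → ℝ)) x' := by
            let L : (Fin d → ℝ) →L[ℝ] (Fin (d+1) → ℝ) :=
              ContinuousLinearMap.pi (fun j => Fin.cases (0 : (Fin d → ℝ) →L[ℝ] ℝ)
                (fun i => ContinuousLinearMap.proj i) j)
            have haffeq : (fun z : Fin d → ℝ => (Fin.cons t₀ z : Fin (d+1) → ℝ))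
                = fun z => Fin.cons t₀ (0 : Fin d → ℝ) + L z := by
              funext z j
              refine Fin.cases ?_ (fun i => ?_) j <;>
                simp [L, ContinuousLinearMap.pi_apply]
            rw [haffeq]
            exact analyticAt_const.add (L.analyticAt x')
          exact AnalyticAt.comp (g := (dLine v)^[K] f)
            (f := fun z : Fin d → ℝ => (Fin.cons t₀ z : Fin (d+1) → ℝ))
            (hgK _ (hmemV t₀ x' ht₀I hx')) haff
        have hZG : volume {x' ∈ P' | G x' = 0} = 0 :=
          ih P' isOpen_ball (convex_ball _ _).isPreconnected G hGanalytic
            ⟨Fin.tail ystar, hystar'.2, hK⟩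
        -- measure plumbing
        set W := {y ∈ ball x r | f y = 0} with hWdef
        have hWmeas : MeasurableSet W := by
          have hopen : IsOpen (V ∩ f ⁻¹' ({0}ᶜ)) :=
            hf.continuousOn.isOpen_inter_preimage hV isOpen_compl_singleton
          have : W = ball x r \ (V ∩ f ⁻¹' ({0}ᶜ)) := by
            ext y
            simp only [hWdef, Set.mem_setOf_eq, Set.mem_diff, Set.mem_inter_iff,
              Set.mem_preimage, Set.mem_compl_iff, Set.mem_singleton_iff]
            constructor
            · rintro ⟨hyB, hyz⟩
              exact ⟨hyB, fun hc => hc.2 hyz⟩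
            · rintro ⟨hyB, hyz⟩
              refine ⟨hyB, ?_⟩
              by_contra hc
              exact hyz ⟨hBV hyB, hc⟩
          rw [this]
          exact measurableSet_ball.diff hopen.measurableSet
        set e := MeasurableEquiv.piFinSuccAbove (fun _ : Fin (d+1) => ℝ) 0 with hedef
        have hesymm : ∀ (t : ℝ) (x' : Fin d → ℝ), e.symm (t, x') = Fin.cons t x' := by
          intro t x'
          simp [hedef, MeasurableEquiv.piFinSuccAbove, Fin.insertNth_zero, Fin.consEquiv]
        set s : Set (ℝ × (Fin d → ℝ)) := e.symm ⁻¹' W with hsdef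
        have hsmeas : MeasurableSet s := e.symm.measurable hWmeas
        have hvol1 : volume s = volume W :=
          ((volume_preserving_piFinSuccAbove (fun _ : Fin (d+1) => ℝ) 0).symm e).measure_preimage
            hWmeas.nullMeasurableSet
        set s' : Set ((Fin d → ℝ) × ℝ) := Prod.swap ⁻¹' s with hs'def
        have hs'meas : MeasurableSet s' := measurable_swap hsmeas
        have hswapmp : MeasurePreserving (Prod.swap)
            (volume : Measure ((Fin d → ℝ) × ℝ)) (volume : Measure (ℝ × (Fin d → ℝ))) := by
          rw [Measure.volume_eq_prod, Measure.volume_eq_prod]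
          exact Measure.measurePreserving_swap
        have hvol2 : volume s' = volume s := hswapmp.measure_preimage hsmeas.nullMeasurableSet
        -- membership in s'
        have hmem_s' : ∀ (x' : Fin d → ℝ) (t : ℝ), (x', t) ∈ s' ↔ Fin.cons t x' ∈ W := by
          intro x' t
          rw [hs'def, Set.mem_preimage, Prod.swap_prod_mk, hsdef, Set.mem_preimage, hesymm]
        -- slices are a.e. null
        have hslices : ∀ᵐ x' : Fin d → ℝ, volume (Prod.mk x' ⁻¹' s') = 0 := by
          have hae : ∀ᵐ x' : Fin d → ℝ, x' ∉ {z ∈ P' | G z = 0} := by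
            rw [ae_iff]
            simpa using hZG
          filter_upwards [hae] with x' hx'
          by_cases hx'P : x' ∈ P'
          · have hGx' : G x' ≠ 0 := fun h => hx' ⟨hx'P, h⟩
            have hsub : Prod.mk x' ⁻¹' s' ⊆ {t ∈ I | f (Fin.cons (0:ℝ) x' + t • v) = 0} := by
              intro t ht
              rw [Set.mem_preimage, hmem_s'] at ht
              obtain ⟨htB, htz⟩ := ht
              exact ⟨((memB t x').mp htB).1, by rwa [cons_eq]⟩
            refine measure_mono_null hsub ?_
            refine Set.Countable.measure_zero ?_ _
            refine aux_countable_zeros (convex_ball _ _).isPreconnected (hsliceA x' hx'P) ?_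
            by_contra hallz
            push_neg at hallz
            have hev : (fun s : ℝ => f (Fin.cons (0:ℝ) x' + s • v)) =ᶠ[𝓝 t₀] 0 :=
              eventually_of_mem (isOpen_ball.mem_nhds ht₀I) hallz
            have hz := (aux_iterate_deriv_ev_zero hev K).self_of_nhds
            rw [aux_slice_deriv hV hf _ v K (by rw [cons_eq]; exact hmemV t₀ x' ht₀I hx'P),
              cons_eq] at hz
            exact hGx' hz
          · have hempty : Prod.mk x' ⁻¹' s' = ∅ := by
              ext t
              simp only [Set.mem_preimage, Set.mem_empty_iff_false, iff_false]
              intro ht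
              rw [hmem_s'] at ht
              exact hx'P ((memB t x').mp ht.1).2
            simp [hempty]
        have hs'0 : volume s' = 0 := by
          rw [Measure.volume_eq_prod, Measure.measure_prod_null hs'meas]
          exact hslices
        rw [← hvol1, ← hvol2, hs'0]
      -- cover the zero set by countably many balls
      have hcov : ∀ x ∈ V, ∃ r > 0, ball x r ⊆ V := fun x hx => by
        obtain ⟨r, hr, hsub⟩ := Metric.isOpen_iff.mp hV x hx
        exact ⟨r, hr, hsub⟩
      choose! rad hrad hradsub using hcov
      obtain ⟨T, hTsub, hTc, hTcov⟩ := TopologicalSpace.countable_cover_nhdsWithin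
        (f := fun x => ball x (rad x)) (s := V)
        (fun x hx => mem_nhdsWithin_of_mem_nhds (ball_mem_nhds x (hrad x hx)))
      have hsub : {y ∈ V | f y = 0} ⊆ ⋃ x ∈ T, {y ∈ ball x (rad x) | f y = 0} := by
        rintro y ⟨hyV, hyz⟩
        obtain ⟨x, hxT, hyB⟩ := Set.mem_iUnion₂.mp (hTcov hyV)
        exact Set.mem_iUnion₂.mpr ⟨x, hxT, hyB, hyz⟩
      refine measure_mono_null hsub ?_
      refine (measure_biUnion_null_iff hTc).mpr ?_
      intro x hxT
      exact key x (rad x) (hrad x (hTsub hxT)) (hradsub x (hTsub hxT))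
theorem zero_set_of_analytic_measure_zero {d : ℕ}
    (U : Set (EuclideanSpace ℝ (Fin d))) (hU : IsOpen U) (hUconn : IsConnected U)
    (A : EuclideanSpace ℝ (Fin d) → ℝ) (hA : AnalyticOn ℝ A U)
    (hne : ¬ ∀ x ∈ U, A x = 0) :
    volume {x ∈ U | A x = 0} = 0 := by
  have hA' : AnalyticOnNhd ℝ A U := (hU.analyticOn_iff_analyticOnNhd).mp hA
  set L := PiLp.continuousLinearEquiv 2 ℝ (fun _ : Fin d => ℝ) with hLdef
  set V : Set (Fin d → ℝ) := L '' U with hVdef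
  have hmemV : ∀ y, y ∈ V ↔ L.symm y ∈ U := by
    intro y
    constructor
    · rintro ⟨z, hz, rfl⟩; simpa using hz
    · intro h; exact ⟨L.symm y, h, by simp⟩
  have hVopen : IsOpen V := by
    have : V = L.symm ⁻¹' U := by ext y; rw [hmemV]; rfl
    rw [this]
    exact hU.preimage L.symm.continuous
  have hVconn : IsPreconnected V :=
    (hUconn.image L L.continuous.continuousOn).isPreconnected
  set g : (Fin d → ℝ) → ℝ := fun y => A (L.symm y) with hgdef
  have hg : AnalyticOnNhd ℝ g V := by
    intro y hy
    exact AnalyticAt.comp (g := A) (f := fun y => L.symm y)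
      (hA' _ ((hmemV y).mp hy)) ((L.symm : (Fin d → ℝ) →L[ℝ] EuclideanSpace ℝ (Fin d)).analyticAt y)
  have hgne : ∃ y ∈ V, g y ≠ 0 := by
    push_neg at hne
    obtain ⟨x₀, hx₀, h⟩ := hne
    exact ⟨L x₀, ⟨x₀, hx₀, rfl⟩, by simpa [hgdef] using h⟩
  have hmain := aux_main d V hVopen hVconn g hg hgne
  -- transfer
  have hTmeas : MeasurableSet {y ∈ V | g y = 0} := by
    have hopen : IsOpen (V ∩ g ⁻¹' ({0}ᶜ)) :=
      hg.continuousOn.isOpen_inter_preimage hVopen isOpen_compl_singleton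
    have : {y ∈ V | g y = 0} = V \ (V ∩ g ⁻¹' ({0}ᶜ)) := by
      ext y
      simp only [Set.mem_setOf_eq, Set.mem_diff, Set.mem_inter_iff, Set.mem_preimage,
        Set.mem_compl_iff, Set.mem_singleton_iff]
      constructor
      · rintro ⟨hyV, hyz⟩; exact ⟨hyV, fun hc => hc.2 hyz⟩
      · rintro ⟨hyV, hyz⟩
        refine ⟨hyV, ?_⟩
        by_contra hc
        exact hyz ⟨hyV, hc⟩
    rw [this]
    exact hVopen.measurableSet.diff hopen.measurableSet
  have hset : {x ∈ U | A x = 0}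
      = (MeasurableEquiv.toLp 2 (Fin d → ℝ)).symm ⁻¹' {y ∈ V | g y = 0} := by
    ext x
    have h1 : (MeasurableEquiv.toLp 2 (Fin d → ℝ)).symm x = L x := rfl
    simp only [Set.mem_preimage, Set.mem_setOf_eq, h1]
    rw [hmemV]
    simp [hgdef]
  rw [hset, ← hmain]
  exact (EuclideanSpace.volume_preserving_symm_measurableEquiv_toLp (Fin d)).measure_preimage
    hTmeas.nullMeasurableSet
end

section
/- Let A be real analytic on a connected open set U ⊆ ℝ^d, not identically zero. Then the zero set F(A) = {x ∈ U : A(x) = 0} is contained in the countable union over multi-indices t ∈ ℕ^d of the sets G(D^t A) = {x ∈ U : (D^t A)(x) = 0, ∇(D^t A)(x) ≠ 0}. -/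
noncomputable def pderivE {d : ℕ} (j : Fin d) (f : EuclideanSpace ℝ (Fin d) → ℝ) :
    EuclideanSpace ℝ (Fin d) → ℝ :=
  fun x => fderiv ℝ f x (EuclideanSpace.single j 1)

noncomputable def mderivList {d : ℕ} :
    List (Fin d) → (EuclideanSpace ℝ (Fin d) → ℝ) → (EuclideanSpace ℝ (Fin d) → ℝ)
  | [], f => f
  | j :: l, f => mderivList l (pderivE j f)

/-- The iterated partial derivative `D^t` for a multi-index `t : Fin d → ℕ`. -/
noncomputable def mderiv {d : ℕ} (t : Fin d → ℕ) (f : EuclideanSpace ℝ (Fin d) → ℝ) :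
    EuclideanSpace ℝ (Fin d) → ℝ :=
  mderivList ((List.finRange d).flatMap fun j => List.replicate (t j) j) f

section aux

variable {d : ℕ} {U : Set (EuclideanSpace ℝ (Fin d))}

lemma pderivE_analytic (hU : IsOpen U) {f : EuclideanSpace ℝ (Fin d) → ℝ}
    (hf : AnalyticOnNhd ℝ f U) (j : Fin d) : AnalyticOnNhd ℝ (pderivE j f) U := by
  have h := (ContinuousLinearMap.apply ℝ ℝ (EuclideanSpace.single j 1)).comp_analyticOnNhd
    (hf.fderiv_of_isOpen hU)
  exact h

lemma mderivList_analytic (hU : IsOpen U) :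
    ∀ (l : List (Fin d)) (f : EuclideanSpace ℝ (Fin d) → ℝ),
      AnalyticOnNhd ℝ f U → AnalyticOnNhd ℝ (mderivList l f) U := by
  intro l
  induction l with
  | nil => exact fun f hf => hf
  | cons j l IH => exact fun f hf => IH _ (pderivE_analytic hU hf j)

lemma pderivE_congr (hU : IsOpen U) {f g : EuclideanSpace ℝ (Fin d) → ℝ}
    (h : ∀ y ∈ U, f y = g y) (j : Fin d) : ∀ x ∈ U, pderivE j f x = pderivE j g x := by
  intro x hx
  have : fderiv ℝ f x = fderiv ℝ g x :=
    Filter.EventuallyEq.fderiv_eq (Filter.eventuallyEq_of_mem (hU.mem_nhds hx) h)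
  simp [pderivE, this]

lemma mderivList_congr (hU : IsOpen U) :
    ∀ (l : List (Fin d)) (f g : EuclideanSpace ℝ (Fin d) → ℝ),
      (∀ y ∈ U, f y = g y) → ∀ x ∈ U, mderivList l f x = mderivList l g x := by
  intro l
  induction l with
  | nil => exact fun f g h => h
  | cons j l IH => exact fun f g h => IH _ _ (pderivE_congr hU h j)

lemma pderivE_comm (hU : IsOpen U) {f : EuclideanSpace ℝ (Fin d) → ℝ}
    (hf : AnalyticOnNhd ℝ f U) (a b : Fin d) :
    ∀ x ∈ U, pderivE a (pderivE b f) x = pderivE b (pderivE a f) x := by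
  intro x hx
  have hfd : AnalyticOnNhd ℝ (fderiv ℝ f) U := hf.fderiv_of_isOpen hU
  have h1 : HasFDerivAt (fderiv ℝ f) (fderiv ℝ (fderiv ℝ f) x) x :=
    (hfd x hx).differentiableAt.hasFDerivAt
  have key : ∀ v : EuclideanSpace ℝ (Fin d),
      fderiv ℝ (fun y => fderiv ℝ f y v) x =
        (ContinuousLinearMap.apply ℝ ℝ v).comp (fderiv ℝ (fderiv ℝ f) x) := by
    intro v
    exact (((ContinuousLinearMap.apply ℝ ℝ v).hasFDerivAt).comp x h1).fderiv
  have hsym : IsSymmSndFDerivAt ℝ f x :=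
    ContDiffAt.isSymmSndFDerivAt (n := (⊤ : WithTop ℕ∞)) (hf x hx).contDiffAt (by norm_num)
  have hs := hsym.eq (EuclideanSpace.single a 1) (EuclideanSpace.single b 1)
  show fderiv ℝ (fun y => fderiv ℝ f y (EuclideanSpace.single b 1)) x (EuclideanSpace.single a 1)
      = fderiv ℝ (fun y => fderiv ℝ f y (EuclideanSpace.single a 1)) x (EuclideanSpace.single b 1)
  rw [key, key]
  simpa using hs

lemma mderivList_perm (hU : IsOpen U) {l₁ l₂ : List (Fin d)} (h : l₁.Perm l₂) :
    ∀ f, AnalyticOnNhd ℝ f U → ∀ x ∈ U, mderivList l₁ f x = mderivList l₂ f x := by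
  induction h with
  | nil => intro f hf x hx; rfl
  | cons a h IH => exact fun f hf x hx => IH (pderivE a f) (pderivE_analytic hU hf a) x hx
  | swap a b l =>
      intro f hf x hx
      show mderivList l (pderivE a (pderivE b f)) x = mderivList l (pderivE b (pderivE a f)) x
      exact mderivList_congr hU l _ _ (pderivE_comm hU hf a b) x hx
  | trans h₁ h₂ IH₁ IH₂ => exact fun f hf x hx => (IH₁ f hf x hx).trans (IH₂ f hf x hx)

lemma mderivList_append {d : ℕ} :
    ∀ (l : List (Fin d)) (j : Fin d) (f : EuclideanSpace ℝ (Fin d) → ℝ),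
      mderivList (l ++ [j]) f = pderivE j (mderivList l f) := by
  intro l
  induction l with
  | nil => intro j f; rfl
  | cons a l IH => intro j f; exact IH j (pderivE a f)

lemma count_canonical {d : ℕ} (t : Fin d → ℕ) (i : Fin d) :
    ((List.finRange d).flatMap fun j => List.replicate (t j) j).count i = t i := by
  rw [List.count_flatMap]
  have h : ∀ j : Fin d, (List.count i ∘ fun j => List.replicate (t j) j) j
      = if j = i then t i else 0 := by
    intro j
    simp only [Function.comp_apply, List.count_replicate]
    split_ifs with h1 h2 h2 <;> simp_all
  rw [List.map_congr_left (fun j _ => h j)]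
  have h2 := List.sum_map_eq_nsmul_single i (fun j => if j = i then t i else 0) ?_
    (l := List.finRange d)
  · rw [h2, List.count_eq_one_of_mem (List.nodup_finRange d) (List.mem_finRange i)]
    simp
  · intro a ha _; simp [ha]

lemma perm_canonical {d : ℕ} (l : List (Fin d)) :
    l.Perm ((List.finRange d).flatMap fun j => List.replicate (l.count j) j) := by
  rw [List.perm_iff_count]
  intro i
  rw [count_canonical]

lemma iteratedFDeriv_eq_mderivList (hU : IsOpen U) :
    ∀ (n : ℕ) (f : EuclideanSpace ℝ (Fin d) → ℝ), AnalyticOnNhd ℝ f U →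
      ∀ x ∈ U, ∀ v : Fin n → Fin d,
      iteratedFDeriv ℝ n f x (fun i => EuclideanSpace.single (v i) 1)
        = mderivList (List.ofFn fun i => v i.rev) f x := by
  intro n
  induction n with
  | zero =>
      intro f hf x hx v
      simp [mderivList]
  | succ n IH =>
      intro f hf x hx v
      rw [iteratedFDeriv_succ_apply_right]
      have hfd : AnalyticOnNhd ℝ (fderiv ℝ f) U := hf.fderiv_of_isOpen hU
      have hcd : ContDiffOn ℝ (⊤ : WithTop ℕ∞) (fderiv ℝ f) U :=
        hfd.contDiffOn hU.uniqueDiffOn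
      have hinit : (Fin.init fun i : Fin (n + 1) => EuclideanSpace.single (v i) (1 : ℝ))
          = fun i : Fin n => EuclideanSpace.single (v i.castSucc) (1 : ℝ) := by
        funext i; simp [Fin.init]
      have e1 := (ContinuousLinearMap.apply ℝ ℝ
          (EuclideanSpace.single (v (Fin.last n)) 1)).iteratedFDerivWithin_comp_left
          (hcd x hx) hU.uniqueDiffOn hx (le_top (a := (n : WithTop ℕ∞)))
      have e2 : iteratedFDerivWithin ℝ n (pderivE (v (Fin.last n)) f) U x
          = (ContinuousLinearMap.apply ℝ ℝ
              (EuclideanSpace.single (v (Fin.last n)) 1)).compContinuousMultilinearMap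
              (iteratedFDerivWithin ℝ n (fderiv ℝ f) U x) := e1
      have e3 : iteratedFDeriv ℝ n (fderiv ℝ f) x
            (fun i : Fin n => EuclideanSpace.single (v i.castSucc) 1)
            (EuclideanSpace.single (v (Fin.last n)) 1)
          = iteratedFDeriv ℝ n (pderivE (v (Fin.last n)) f) x
            (fun i : Fin n => EuclideanSpace.single (v i.castSucc) 1) := by
        rw [← iteratedFDerivWithin_of_isOpen (f := fderiv ℝ f) n hU hx,
          ← iteratedFDerivWithin_of_isOpen (f := pderivE (v (Fin.last n)) f) n hU hx, e2]
        rfl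
      rw [hinit, e3, IH _ (pderivE_analytic hU hf _) x hx (fun i => v i.castSucc)]
      have e4 : (List.ofFn fun i : Fin (n + 1) => v i.rev)
          = v (Fin.last n) :: List.ofFn (fun i : Fin n => v i.rev.castSucc) := by
        rw [List.ofFn_succ]
        have h0 : (0 : Fin (n + 1)).rev = Fin.last n := by
          ext; simp
        have hsucc : ∀ i : Fin n, (i.succ : Fin (n + 1)).rev = i.rev.castSucc := by
          intro i; ext; simp
        rw [h0]
        exact congrArg₂ List.cons rfl
          (congrArg List.ofFn (funext fun i => congrArg v (hsucc i)))
      rw [e4]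
      rfl

end aux

theorem zero_set_subset_union_G {d : ℕ}
    (U : Set (EuclideanSpace ℝ (Fin d))) (hU : IsOpen U) (hUconn : IsConnected U)
    (A : EuclideanSpace ℝ (Fin d) → ℝ) (hA : AnalyticOn ℝ A U)
    (hne : ¬ ∀ x ∈ U, A x = 0) :
    {x ∈ U | A x = 0} ⊆
      ⋃ t : Fin d → ℕ, {x ∈ U | mderiv t A x = 0 ∧ gradient (mderiv t A) x ≠ 0} := by
  have hAn : AnalyticOnNhd ℝ A U := (hU.analyticOn_iff_analyticOnNhd).mp hA
  intro x hxmem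
  obtain ⟨hxU, hA0⟩ := hxmem
  by_contra hnot
  rw [Set.mem_iUnion] at hnot
  push_neg at hnot
  have H : ∀ t : Fin d → ℕ, mderiv t A x = 0 → gradient (mderiv t A) x = 0 := by
    intro t h0
    have := hnot t
    simp only [Set.mem_setOf_eq] at this
    by_contra hg
    exact this ⟨hxU, h0, hg⟩
  -- all iterated partial derivatives of A vanish at x
  have claim1 : ∀ l : List (Fin d), mderivList l A x = 0 := by
    intro l
    induction l using List.reverseRecOn with
    | nil => exact hA0
    | append_singleton l j IH =>
        have hperm := perm_canonical l
        set t : Fin d → ℕ := fun j => l.count j with ht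
        have heqU : ∀ y ∈ U, mderivList l A y = mderiv t A y := by
          intro y hy
          exact mderivList_perm hU hperm A hAn y hy
        have h0 : mderiv t A x = 0 := (heqU x hxU).symm.trans IH
        have hg : gradient (mderiv t A) x = 0 := H t h0
        have hfd0 : fderiv ℝ (mderiv t A) x = 0 := by
          have := congrArg (InnerProductSpace.toDual ℝ (EuclideanSpace ℝ (Fin d))) hg
          simpa [gradient] using this
        rw [mderivList_append]
        show fderiv ℝ (mderivList l A) x (EuclideanSpace.single j 1) = 0
        have : fderiv ℝ (mderivList l A) x = fderiv ℝ (mderiv t A) x :=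
          Filter.EventuallyEq.fderiv_eq (Filter.eventuallyEq_of_mem (hU.mem_nhds hxU) heqU)
        rw [this, hfd0]
        rfl
  have claim2 : ∀ (n : ℕ) (v : Fin n → Fin d),
      iteratedFDeriv ℝ n A x (fun i => EuclideanSpace.single (v i) 1) = 0 := by
    intro n v
    rw [iteratedFDeriv_eq_mderivList hU n A hAn x hxU v]
    exact claim1 _
  have claim3 : ∀ (n : ℕ) (y : EuclideanSpace ℝ (Fin d)),
      iteratedFDeriv ℝ n A x (fun _ => y) = 0 := by
    intro n y
    have hy : y = ∑ j : Fin d, y j • EuclideanSpace.single j (1 : ℝ) := by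
      have h := (EuclideanSpace.basisFun (Fin d) ℝ).sum_repr y
      simp only [EuclideanSpace.basisFun_repr, EuclideanSpace.basisFun_apply] at h
      exact h.symm
    rw [hy]
    have hms := MultilinearMap.map_sum (iteratedFDeriv ℝ n A x).toMultilinearMap
      (g := fun (_ : Fin n) (j : Fin d) => y j • EuclideanSpace.single j (1 : ℝ))
    simp only [ContinuousMultilinearMap.coe_coe] at hms
    rw [hms]
    apply Finset.sum_eq_zero
    intro v _
    have hsm := (iteratedFDeriv ℝ n A x).toMultilinearMap.map_smul_univ
      (fun i => y (v i)) (fun i => EuclideanSpace.single (v i) (1 : ℝ))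
    simp only [ContinuousMultilinearMap.coe_coe] at hsm
    rw [hsm, claim2 n v]
    simp
  have hev : A =ᶠ[nhds x] 0 := by
    obtain ⟨p, hp⟩ := hAn x hxU
    obtain ⟨r, hpr⟩ := hp
    filter_upwards [Metric.eball_mem_nhds x hpr.r_pos] with z hz
    have hz' : z - x ∈ Metric.eball (0 : EuclideanSpace ℝ (Fin d)) r := by
      rw [Metric.mem_eball] at hz ⊢
      simpa [edist_eq_enorm_sub] using hz
    have hsum := hpr.hasSum_iteratedFDeriv hz'
    have h0sum : HasSum (fun n : ℕ => ((n.factorial : ℝ))⁻¹ •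
        iteratedFDeriv ℝ n A x fun _ => z - x) 0 := by
      have hzero : (fun n : ℕ => ((n.factorial : ℝ))⁻¹ •
          iteratedFDeriv ℝ n A x fun _ => z - x) = fun _ => (0 : ℝ) := by
        funext n
        rw [claim3 n (z - x)]
        simp
      rw [hzero]
      exact hasSum_zero
    have hz0 : A (x + (z - x)) = 0 := hsum.unique h0sum
    simpa using hz0
  have : Set.EqOn A 0 U :=
    hAn.eqOn_zero_of_preconnected_of_eventuallyEq_zero hUconn.isPreconnected hxU hev
  exact hne fun y hy => this hy
end
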